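/- Let A ⊂ ℝⁿ be a convex set with the origin in its interior. There exists r > 0 depending only on A such that: for every convex integrable function ψ : A → ℝ with ψ(0) = inf ψ and ∫_A ψ dλ ≤ 0, one has ψ(y) ≤ ψ(0)/2 whenever |y| ≤ r. -/

import Mathlib

open MeasureTheory Metric Set

/-- Lower bound a set integral by the infimum of the function times the measure. -/
lemma aux_const_le_setIntegral {n : ℕ} {S : Set (EuclideanSpace ℝ (Fin n))}
    {ψ : EuclideanSpace ℝ (Fin n) → ℝ} {m : ℝ}
    (hS : NullMeasurableSet S volume) (hfin : volume S ≠ ⊤)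
    (hint : IntegrableOn ψ S) (hle : ∀ z ∈ S, m ≤ ψ z) :
    m * (volume S).toReal ≤ ∫ z in S, ψ z := by
  have h1 : ∫ _z in S, m ≤ ∫ z in S, ψ z := by
    refine integral_mono_ae (integrableOn_const hfin) hint ?_
    exact (ae_restrict_mem₀ hS).mono fun z hz => hle z hz
  simpa [setIntegral_const, smul_eq_mul, mul_comm, measureReal_def] using h1

/-- Reflection/midpoint trick: the average of a convex function over a ball in its domain
is at least its value at the center. -/
lemma aux_midpoint {n : ℕ} {A : Set (EuclideanSpace ℝ (Fin n))}
    {ψ : EuclideanSpace ℝ (Fin n) → ℝ} (hψ : ConvexOn ℝ A ψ)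
    (q : EuclideanSpace ℝ (Fin n)) (δ : ℝ)
    (hsub : ball q δ ⊆ A) (hint : IntegrableOn ψ (ball q δ)) :
    (volume (ball q δ)).toReal * ψ q ≤ ∫ z in ball q δ, ψ z := by
  set B := ball q δ with hB
  have hmp : MeasurePreserving (fun z => (2:ℝ) • q - z)
      (volume : Measure (EuclideanSpace ℝ (Fin n))) volume :=
    Measure.measurePreserving_sub_left volume ((2:ℝ) • q)
  have hemb : MeasurableEmbedding (fun z : EuclideanSpace ℝ (Fin n) => (2:ℝ) • q - z) :=
    (MeasurableEquiv.subLeft ((2:ℝ) • q)).measurableEmbedding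
  have hdist : ∀ z : EuclideanSpace ℝ (Fin n), dist ((2:ℝ) • q - z) q = dist z q := by
    intro z
    rw [dist_eq_norm, dist_eq_norm]
    have : (2:ℝ) • q - z - q = -(z - q) := by
      rw [two_smul]; abel
    rw [this, norm_neg]
  have hpre : (fun z : EuclideanSpace ℝ (Fin n) => (2:ℝ) • q - z) ⁻¹' B = B := by
    ext z
    simp only [mem_preimage, hB, mem_ball, hdist]
  have key : ∫ z in B, ψ ((2:ℝ) • q - z) = ∫ z in B, ψ z := by
    have := hmp.setIntegral_preimage_emb hemb ψ B
    rwa [hpre] at this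
  have hint2 : IntegrableOn (fun z => ψ ((2:ℝ) • q - z)) B := by
    have := (hmp.integrableOn_comp_preimage hemb (f := ψ) (s := B))
    rw [hpre] at this
    exact this.mpr hint
  have hmem : ∀ z ∈ B, (2:ℝ) • q - z ∈ B := by
    intro z hz
    simpa only [hB, mem_ball, hdist] using hz
  have hconvpt : ∀ z ∈ B, 2 * ψ q ≤ ψ z + ψ ((2:ℝ) • q - z) := by
    intro z hz
    have h1 : z ∈ A := hsub hz
    have h2 : (2:ℝ) • q - z ∈ A := hsub (hmem z hz)
    have hcomb : (1/2 : ℝ) • z + (1/2 : ℝ) • ((2:ℝ) • q - z) = q := by module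
    have := hψ.2 h1 h2 (by norm_num : (0:ℝ) ≤ 1/2) (by norm_num : (0:ℝ) ≤ 1/2) (by norm_num)
    rw [hcomb] at this
    simp only [smul_eq_mul] at this
    linarith
  have hmono : ∫ _z in B, (2 * ψ q) ≤ ∫ z in B, (ψ z + ψ ((2:ℝ) • q - z)) := by
    refine setIntegral_mono_on (integrableOn_const measure_ball_lt_top.ne)
      (hint.add hint2) measurableSet_ball hconvpt
  rw [setIntegral_const, integral_add hint hint2, key] at hmono
  have hv : (0:ℝ) ≤ (volume B).toReal := ENNReal.toReal_nonneg
  simp only [smul_eq_mul, measureReal_def] at hmono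
  nlinarith [hmono]

set_option maxHeartbeats 2000000 in
/-- Klartag's lemma: if `A` is convex with the origin in its interior, then there is
`r > 0` depending only on `A` such that every integrable convex `ψ : A → ℝ` with
`ψ 0 = inf ψ` and `∫_A ψ ≤ 0` satisfies `ψ y ≤ ψ 0 / 2` whenever `‖y‖ ≤ r`. -/
theorem stmt3 {n : ℕ} (A : Set (EuclideanSpace ℝ (Fin n)))
    (hconv : Convex ℝ A) (h0 : (0 : EuclideanSpace ℝ (Fin n)) ∈ interior A) :
    ∃ r > (0 : ℝ), ∀ ψ : EuclideanSpace ℝ (Fin n) → ℝ,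
      ConvexOn ℝ A ψ → IntegrableOn ψ A →
      (∀ y ∈ A, ψ 0 ≤ ψ y) → (∫ y in A, ψ y) ≤ 0 →
      ∀ y ∈ A, ‖y‖ ≤ r → ψ y ≤ ψ 0 / 2 := by
  classical
  obtain ⟨ρ, hρ, hballint⟩ :
      ∃ ρ > 0, ball (0 : EuclideanSpace ℝ (Fin n)) ρ ⊆ interior A :=
    Metric.isOpen_iff.mp isOpen_interior 0 h0
  have hballA : ball (0 : EuclideanSpace ℝ (Fin n)) ρ ⊆ A := hballint.trans interior_subset
  set v := (volume (ball (0 : EuclideanSpace ℝ (Fin n)) (ρ/2))).toReal with hv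
  have hvpos : 0 < v := by
    have h1 : (0 : ENNReal) < volume (ball (0 : EuclideanSpace ℝ (Fin n)) (ρ/2)) :=
      measure_ball_pos volume 0 (by linarith)
    exact ENNReal.toReal_pos h1.ne' measure_ball_lt_top.ne
  set vA := (volume A).toReal with hvA
  have hvAnn : 0 ≤ vA := ENNReal.toReal_nonneg
  set T : ℝ := 3 + 2 * vA / v with hT
  have hT3 : 3 ≤ T := by
    rw [hT]
    have : 0 ≤ 2 * vA / v := by positivity
    linarith
  have hTpos : 0 < T := by linarith
  refine ⟨min (ρ/4) (ρ/(2*T)), lt_min (by positivity) (by positivity), ?_⟩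
  intro ψ hψ hint hmin hneg y hyA hyr
  by_contra hcon
  push_neg at hcon
  set m := ψ 0 with hm
  have h0A : (0 : EuclideanSpace ℝ (Fin n)) ∈ A := interior_subset h0
  have hANull : NullMeasurableSet A volume := hconv.nullMeasurableSet volume
  have hyρ4 : ‖y‖ ≤ ρ/4 := hyr.trans (min_le_left _ _)
  have hyT : ‖y‖ ≤ ρ/(2*T) := hyr.trans (min_le_right _ _)
  -- m ≤ 0
  have hm0 : m ≤ 0 := by
    by_contra hpos
    push_neg at hpos
    by_cases hfin : volume A < ⊤
    · have h1 := aux_const_le_setIntegral hANull hfin.ne hint hmin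
      have hvApos : 0 < vA := by
        refine ENNReal.toReal_pos ?_ hfin.ne
        exact (lt_of_lt_of_le (measure_ball_pos volume 0 hρ) (measure_mono hballA)).ne'
      nlinarith
    · have htop : volume A = ⊤ := by simpa [lt_top_iff_ne_top, not_not] using hfin
      have hfi := hint.2
      have hb : ∀ᵐ z ∂(volume.restrict A), ENNReal.ofReal m ≤ ‖ψ z‖₊ := by
        refine (ae_restrict_mem₀ hANull).mono fun z hz => ?_
        calc ENNReal.ofReal m ≤ ENNReal.ofReal (ψ z) := ENNReal.ofReal_le_ofReal (hmin z hz)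
          _ ≤ ‖ψ z‖₊ := Real.ofReal_le_enorm _
      have hle := lintegral_mono_ae hb
      rw [lintegral_const, Measure.restrict_apply_univ, htop,
        ENNReal.mul_top (by simpa [ENNReal.ofReal_eq_zero] using hpos)] at hle
      exact absurd (lt_of_le_of_lt hle hfi) (by simp)
  by_cases hfin : volume A < ⊤
  · -- FINITE MEASURE CASE
    have hyne : y ≠ 0 := by
      intro h
      rw [h, ← hm] at hcon
      linarith
    have hynorm : 0 < ‖y‖ := norm_pos_iff.mpr hyne
    set t := ρ / (2 * ‖y‖) with ht
    have htT : T ≤ t := by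
      have h1 : ‖y‖ * (2*T) ≤ ρ := (le_div_iff₀ (by positivity)).mp hyT
      rw [ht, le_div_iff₀ (by positivity)]
      nlinarith [h1]
    have ht1 : 1 ≤ t := by linarith
    have htpos : 0 < t := by linarith
    set q := t • y with hq
    have hqnorm : ‖q‖ = ρ/2 := by
      rw [hq, norm_smul, Real.norm_eq_abs, abs_of_pos htpos, ht]
      field_simp [hynorm.ne']
    have hqball : ball q (ρ/2) ⊆ ball (0 : EuclideanSpace ℝ (Fin n)) ρ := by
      intro z hz
      rw [mem_ball] at hz ⊢
      have h1 : dist z 0 ≤ dist z q + dist q 0 := dist_triangle _ _ _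
      simp only [dist_zero_right] at h1 ⊢
      rw [hqnorm] at h1
      rw [← dist_zero_right z] at h1 ⊢
      linarith
    have hqBA : ball q (ρ/2) ⊆ A := hqball.trans hballA
    have hqA : q ∈ A := by
      apply hballA
      rw [mem_ball, dist_zero_right, hqnorm]
      linarith
    have hcomb : t⁻¹ • q + (1 - t⁻¹) • (0 : EuclideanSpace ℝ (Fin n)) = y := by
      rw [hq, smul_smul, inv_mul_cancel₀ htpos.ne']
      simp
    have hψy := hψ.2 hqA h0A (by positivity : (0:ℝ) ≤ t⁻¹)
      (by
        have h5 : t⁻¹ ≤ 1 := by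
          rw [inv_le_one_iff₀]; right; exact ht1
        linarith : (0:ℝ) ≤ 1 - t⁻¹) (by ring)
    rw [hcomb] at hψy
    simp only [smul_eq_mul, ← hm] at hψy
    have hψq : m - t * m / 2 < ψ q := by
      have h2 : t * (m/2) < t * (t⁻¹ * ψ q + (1 - t⁻¹) * m) :=
        mul_lt_mul_of_pos_left (lt_of_lt_of_le hcon hψy) htpos
      have h3 : t * (t⁻¹ * ψ q + (1 - t⁻¹) * m) = ψ q + (t - 1) * m := by
        field_simp [htpos.ne']
        try ring
      rw [h3] at h2
      linarith
    have hintB : IntegrableOn ψ (ball q (ρ/2)) := hint.mono_set hqBA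
    have hmid := aux_midpoint hψ q (ρ/2) hqBA hintB
    have hvol : (volume (ball q (ρ/2))).toReal = v := by
      rw [hv, Measure.addHaar_ball_center]
    rw [hvol] at hmid
    have hsplit : ∫ z in A, ψ z
        = (∫ z in A \ ball q (ρ/2), ψ z) + ∫ z in ball q (ρ/2), ψ z := by
      rw [← setIntegral_union disjoint_sdiff_left measurableSet_ball
        (hint.mono_set diff_subset) hintB, diff_union_of_subset hqBA]
    have hABfin : volume (A \ ball q (ρ/2)) ≠ ⊤ :=
      ((measure_mono diff_subset).trans_lt hfin).ne
    have hlow := aux_const_le_setIntegral ((hANull).diff measurableSet_ball.nullMeasurableSet) hABfin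
      (hint.mono_set diff_subset) (fun z hz => hmin z hz.1)
    have hmono' : (volume (A \ ball q (ρ/2))).toReal ≤ vA :=
      ENNReal.toReal_mono hfin.ne (measure_mono diff_subset)
    have hmAB : 0 ≤ (volume (A \ ball q (ρ/2))).toReal := ENNReal.toReal_nonneg
    have hBub : ∫ z in ball q (ρ/2), ψ z ≤ -m * vA := by
      have h4 : ∫ z in ball q (ρ/2), ψ z ≤ -(∫ z in A \ ball q (ρ/2), ψ z) := by
        linarith [hsplit, hneg]
      have h6 : -(m * (volume (A \ ball q (ρ/2))).toReal) ≤ -m * vA := by nlinarith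
      linarith
    have hvT : v * T = 3 * v + 2 * vA := by
      rw [hT]
      field_simp [hvpos.ne']
      try ring
    have hvt : 3 * v + 2 * vA ≤ v * t := by
      rw [← hvT]
      exact mul_le_mul_of_nonneg_left htT hvpos.le
    have hfin1 : v * (m - t * m / 2) < -m * vA := by
      have := mul_lt_mul_of_pos_left hψq hvpos
      linarith [hmid]
    nlinarith [mul_nonpos_of_nonpos_of_nonneg hm0 hvAnn,
      mul_le_mul_of_nonpos_left hvt hm0]
  · -- INFINITE MEASURE CASE
    by_cases hmz : m = 0
    · -- m = 0
      have hb' : ball y (ρ/2) ⊆ A := by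
        intro z hz
        apply hballA
        rw [mem_ball] at hz ⊢
        have h1 : dist z 0 ≤ dist z y + dist y 0 := dist_triangle _ _ _
        simp only [dist_zero_right] at h1 ⊢
        linarith [hyρ4, hz]
      have hmid := aux_midpoint hψ y (ρ/2) hb' (hint.mono_set hb')
      have hnonneg : 0 ≤ᵐ[volume.restrict A] ψ :=
        (ae_restrict_mem₀ hANull).mono fun z hz => by
          have h2 := hmin z hz; rw [hmz] at h2; exact h2
      have hsub' : ∫ z in ball y (ρ/2), ψ z ≤ ∫ z in A, ψ z :=
        setIntegral_mono_set hint hnonneg (HasSubset.Subset.eventuallyLE hb')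
      have hvol : (volume (ball y (ρ/2))).toReal = v := by
        rw [hv, Measure.addHaar_ball_center]
      rw [hvol] at hmid
      have hψy : 0 < ψ y := by rw [hmz] at hcon; linarith
      nlinarith
    · have hmneg : m < 0 := lt_of_le_of_ne hm0 hmz
      have hunb : ¬ Bornology.IsBounded A := fun hb => hfin hb.measure_lt_top
      have hexists : ∀ k : ℕ, ∃ x : EuclideanSpace ℝ (Fin n), x ∈ A ∧ (k:ℝ) < ‖x‖ := by
        intro k
        by_contra hcontra
        push_neg at hcontra
        exact hunb (isBounded_iff_forall_norm_le.mpr ⟨k, hcontra⟩)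
      choose x hxA hxn using hexists
      have hxpos : ∀ k, 0 < ‖x k‖ := fun k => lt_of_le_of_lt (Nat.cast_nonneg k) (hxn k)
      set u : ℕ → EuclideanSpace ℝ (Fin n) := fun k => ‖x k‖⁻¹ • x k with hu
      have husph : ∀ k, u k ∈ sphere (0 : EuclideanSpace ℝ (Fin n)) 1 := by
        intro k
        rw [mem_sphere_zero_iff_norm, hu, norm_smul, Real.norm_eq_abs,
          abs_of_pos (inv_pos.mpr (hxpos k)), inv_mul_cancel₀ (hxpos k).ne']
      obtain ⟨e, hesph, φ, hφmono, hφtend⟩ :=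
        (isCompact_sphere (0 : EuclideanSpace ℝ (Fin n)) 1).tendsto_subseq husph
      have henorm : ‖e‖ = 1 := mem_sphere_zero_iff_norm.mp hesph
      have hray_cl : ∀ t : ℝ, 0 ≤ t → t • e ∈ closure A := by
        intro t htt
        refine mem_closure_of_tendsto (hφtend.const_smul t) ?_
        filter_upwards [Filter.eventually_ge_atTop ⌈t⌉₊] with k hk
        have hkφ : (k:ℝ) ≤ (φ k : ℝ) := Nat.cast_le.mpr hφmono.le_apply
        have hkt : t ≤ ‖x (φ k)‖ := by
          have h1 : t ≤ (⌈t⌉₊ : ℝ) := Nat.le_ceil t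
          have h2 : ((⌈t⌉₊ : ℕ) : ℝ) ≤ (k : ℝ) := Nat.cast_le.mpr hk
          linarith [hxn (φ k)]
        have hs0 : 0 ≤ t / ‖x (φ k)‖ := by positivity
        have hs1 : t / ‖x (φ k)‖ ≤ 1 := div_le_one_of_le₀ hkt (norm_nonneg _)
        have hmem : (1 - t/‖x (φ k)‖) • (0 : EuclideanSpace ℝ (Fin n))
            + (t/‖x (φ k)‖) • x (φ k) ∈ A :=
          hconv h0A (hxA (φ k)) (by linarith) hs0 (by ring)
        have heq : t • u (φ k) = (1 - t/‖x (φ k)‖) • (0 : EuclideanSpace ℝ (Fin n))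
            + (t/‖x (φ k)‖) • x (φ k) := by
          rw [hu]
          simp only [smul_zero, zero_add, smul_smul]
          rw [div_eq_mul_inv]
        show t • u (φ k) ∈ A
        rw [heq]
        exact hmem
      have hray_ball : ∀ t : ℝ, 0 ≤ t → ball (t • e) (ρ/2) ⊆ A := by
        intro t htt z hz
        have hznorm : ‖z - t • e‖ < ρ/2 := by
          rw [← dist_eq_norm]; exact hz
        have hw : (2:ℝ) • z - (2*t) • e ∈ interior A := by
          apply hballint
          rw [mem_ball_zero_iff]
          have heq2 : (2:ℝ) • z - (2*t) • e = (2:ℝ) • (z - t • e) := by module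
          rw [heq2, norm_smul, Real.norm_eq_abs]
          rw [abs_of_pos (by norm_num : (0:ℝ) < 2)]
          linarith
        have hcl : (2*t) • e ∈ closure A := hray_cl (2*t) (by linarith)
        have hseg : z ∈ openSegment ℝ ((2:ℝ) • z - (2*t) • e) ((2*t) • e) :=
          ⟨1/2, 1/2, by norm_num, by norm_num, by norm_num, by module⟩
        exact interior_subset
          (hconv.openSegment_interior_closure_subset_interior hw hcl hseg)
      have hrayA : ∀ t : ℝ, 0 ≤ t → t • e ∈ A := fun t htt =>
        hray_ball t htt (mem_ball_self (by positivity))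
      set I := ∫ z in A, |ψ z| with hI
      have hInn : 0 ≤ I := integral_nonneg fun z => abs_nonneg _
      have hintabs : IntegrableOn (fun z => |ψ z|) A := hint.abs
      have hballbound : ∀ S : Set (EuclideanSpace ℝ (Fin n)), S ⊆ A →
          (∫ z in S, ψ z) ≤ I := by
        intro S hS
        have hiS : IntegrableOn ψ S := hint.mono_set hS
        calc ∫ z in S, ψ z ≤ ∫ z in S, |ψ z| :=
              integral_mono hiS hiS.abs fun z => le_abs_self _
          _ ≤ I := setIntegral_mono_set hintabs
              (Filter.Eventually.of_forall fun z => abs_nonneg _)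
              (HasSubset.Subset.eventuallyLE hS)
      have hconst : ∀ t : ℝ, 0 ≤ t → ψ (t • e) ≤ m := by
        intro t htt
        by_contra hgt
        push_neg at hgt
        have htne : t ≠ 0 := by
          intro h
          rw [h, zero_smul, ← hm] at hgt
          exact lt_irrefl _ hgt
        have htpos : 0 < t := lt_of_le_of_ne htt (Ne.symm htne)
        have hdpos : 0 < ψ (t • e) - m := by linarith
        set d := ψ (t • e) - m with hd
        set s := max 1 ((I / v + 1 - m) / d) with hs
        have hs1 : 1 ≤ s := le_max_left _ _
        have hs2 : (I / v + 1 - m) / d ≤ s := le_max_right _ _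
        clear_value d s
        have hspos : 0 < s := by linarith
        have hcomb2 : s⁻¹ • ((s*t) • e) + (1 - s⁻¹) • (0 : EuclideanSpace ℝ (Fin n))
            = t • e := by
          rw [smul_smul, smul_zero, add_zero]
          congr 1
          field_simp [hspos.ne']
        have hmemst : (s*t) • e ∈ A := hrayA _ (by positivity)
        have hcx := hψ.2 hmemst h0A (by positivity : (0:ℝ) ≤ s⁻¹)
          (by
            have h5 : s⁻¹ ≤ 1 := by rw [inv_le_one_iff₀]; right; exact hs1
            linarith : (0:ℝ) ≤ 1 - s⁻¹) (by ring)
        rw [hcomb2] at hcx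
        simp only [smul_eq_mul, ← hm] at hcx
        have hlower : m + s * d ≤ ψ ((s*t) • e) := by
          have h2 : s * ψ (t • e) ≤ s * (s⁻¹ * ψ ((s*t) • e) + (1 - s⁻¹) * m) :=
            mul_le_mul_of_nonneg_left hcx hspos.le
          have h3 : s * (s⁻¹ * ψ ((s*t) • e) + (1 - s⁻¹) * m)
              = ψ ((s*t) • e) + (s - 1) * m := by
            field_simp [hspos.ne']
            try ring
          rw [h3] at h2
          have h7 : s * ψ (t • e) = s * d + s * m := by rw [hd]; ring
          linarith
        have hbsub := hray_ball (s*t) (by positivity)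
        have hmid := aux_midpoint hψ ((s*t) • e) (ρ/2) hbsub (hint.mono_set hbsub)
        have hvol : (volume (ball ((s*t) • e) (ρ/2))).toReal = v := by
          rw [hv, Measure.addHaar_ball_center]
        rw [hvol] at hmid
        have hub := hballbound _ hbsub
        have hsd : I / v + 1 - m ≤ s * d := by
          rw [div_le_iff₀ hdpos] at hs2
          linarith
        have hIv : v * (I / v) = I := by field_simp [hvpos.ne']
        have hub' : v * ψ ((s*t) • e) ≤ I := le_trans hmid hub
        have h11 : I/v + 1 ≤ ψ ((s*t) • e) := by linarith
        have h12 : v * (I/v + 1) ≤ v * ψ ((s*t) • e) :=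
          mul_le_mul_of_nonneg_left h11 hvpos.le
        have h13 : v * (I/v + 1) = I + v := by rw [mul_add, hIv, mul_one]
        linarith
      -- maximum of ψ on a small closed ball
      have hcball : closedBall (0 : EuclideanSpace ℝ (Fin n)) (ρ/2) ⊆ interior A := by
        intro z hz
        apply hballint
        rw [mem_closedBall_zero_iff] at hz
        rw [mem_ball_zero_iff]
        linarith
      have hcont : ContinuousOn ψ (closedBall (0 : EuclideanSpace ℝ (Fin n)) (ρ/2)) :=
        (hψ.continuousOn_interior).mono hcball
      obtain ⟨zM, hzM, hmax⟩ :=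
        (isCompact_closedBall (0 : EuclideanSpace ℝ (Fin n)) (ρ/2)).exists_isMaxOn
          ⟨0, mem_closedBall_self (by positivity)⟩ hcont
      set M := ψ zM with hM
      have hMle : ∀ z ∈ closedBall (0 : EuclideanSpace ℝ (Fin n)) (ρ/2), ψ z ≤ M :=
        fun z hz => hmax hz
      have hmM : m ≤ M := hmin zM (interior_subset (hcball hzM))
      set ε := min (1/2 : ℝ) ((-m/2) / (M - m + 1)) with hε
      have hMm1 : 0 < M - m + 1 := by linarith
      have hεpos : 0 < ε := lt_min (by norm_num) (div_pos (by linarith) hMm1)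
      have hε12 : ε ≤ 1/2 := min_le_left _ _
      have hεkey : ε * (M - m) ≤ -m/2 := by
        have h1 : ε ≤ (-m/2) / (M - m + 1) := min_le_right _ _
        rw [le_div_iff₀ hMm1] at h1
        nlinarith [hεpos]
      set c : ℕ → EuclideanSpace ℝ (Fin n)
        := fun k => ((1-ε) * (2*((k:ℝ)+1)*ρ)) • e with hc
      have htube : ∀ k : ℕ, ∀ z ∈ ball (c k) (ε*ρ/4), z ∈ A ∧ ψ z ≤ m/2 := by
        intro k z hz
        set a : EuclideanSpace ℝ (Fin n) := (2*((k:ℝ)+1)*ρ) • e with ha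
        have hceq : c k = (1-ε) • a := by rw [hc, ha, smul_smul]
        set w := ε⁻¹ • (z - (1-ε) • a) with hw
        have hznorm : ‖z - (1-ε) • a‖ < ε*ρ/4 := by
          rw [← dist_eq_norm, ← hceq]; exact hz
        have hwnorm : ‖w‖ ≤ ρ/2 := by
          rw [hw, norm_smul, Real.norm_eq_abs, abs_of_pos (inv_pos.mpr hεpos)]
          have h1 : ε⁻¹ * ‖z - (1-ε) • a‖ ≤ ε⁻¹ * (ε*ρ/4) :=
            mul_le_mul_of_nonneg_left hznorm.le (inv_pos.mpr hεpos).le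
          have h2 : ε⁻¹ * (ε*ρ/4) = ρ/4 := by field_simp [hεpos.ne']; try ring
          linarith
        have hwA : w ∈ A := interior_subset (hcball (mem_closedBall_zero_iff.mpr hwnorm))
        have hrA : a ∈ A := by rw [ha]; exact hrayA _ (by positivity)
        have hzeq : z = (1-ε) • a + ε • w := by
          rw [hw, smul_inv_smul₀ hεpos.ne']
          abel
        have hψr : ψ a ≤ m := by rw [ha]; exact hconst _ (by positivity)
        have hψw : ψ w ≤ M := hMle w (mem_closedBall_zero_iff.mpr hwnorm)
        constructor
        · rw [hzeq]
          exact hconv hrA hwA (by linarith) hεpos.le (by ring)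
        · have hcx := hψ.2 hrA hwA (by linarith : (0:ℝ) ≤ 1-ε) hεpos.le (by ring)
          rw [← hzeq] at hcx
          simp only [smul_eq_mul] at hcx
          nlinarith [hεkey, hεpos, hε12]
      set w0 := (volume (ball (0 : EuclideanSpace ℝ (Fin n)) (ε*ρ/4))).toReal with hw0
      have hw0pos : 0 < w0 := by
        have h1 : (0 : ENNReal) < volume (ball (0 : EuclideanSpace ℝ (Fin n)) (ε*ρ/4)) :=
          measure_ball_pos volume 0 (by positivity)
        exact ENNReal.toReal_pos h1.ne' measure_ball_lt_top.ne
      have heach : ∀ k : ℕ, (-m/2) * w0 ≤ ∫ z in ball (c k) (ε*ρ/4), |ψ z| := by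
        intro k
        have hsubA : ball (c k) (ε*ρ/4) ⊆ A := fun z hz => (htube k z hz).1
        have h1 := aux_const_le_setIntegral (m := -m/2)
          measurableSet_ball.nullMeasurableSet measure_ball_lt_top.ne
          (hintabs.mono_set hsubA) (fun z hz => by
            have h2 := (htube k z hz).2
            have h3 : -ψ z ≤ |ψ z| := neg_le_abs _
            linarith)
        have hvol : (volume (ball (c k) (ε*ρ/4))).toReal = w0 := by
          rw [hw0, Measure.addHaar_ball_center]
        rw [hvol] at h1
        exact h1
      obtain ⟨K, hK⟩ := exists_nat_gt (I / ((-m/2) * w0))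
      have hdisj : (↑(Finset.range K) : Set ℕ).Pairwise
          (Function.onFun Disjoint fun k => ball (c k) (ε*ρ/4)) := by
        intro i _ j _ hij
        apply ball_disjoint_ball
        have hdist : dist (c i) (c j) = (1-ε) * (2*ρ) * |(i:ℝ) - (j:ℝ)| := by
          rw [dist_eq_norm, hc]
          have h4 : ((1-ε) * (2*((i:ℝ)+1)*ρ)) • e - ((1-ε) * (2*((j:ℝ)+1)*ρ)) • e
              = ((1-ε) * (2*ρ) * ((i:ℝ) - (j:ℝ))) • e := by
            rw [← sub_smul]
            congr 1
            ring
          rw [h4, norm_smul, Real.norm_eq_abs, henorm, mul_one, abs_mul,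
            abs_of_nonneg (by nlinarith [hε12, hρ] : (0:ℝ) ≤ (1-ε) * (2*ρ))]
        have hij1 : (1:ℝ) ≤ |(i:ℝ) - (j:ℝ)| := by
          have h2 : (i:ℤ) ≠ (j:ℤ) := by exact_mod_cast hij
          have h3 : (1:ℤ) ≤ |(i:ℤ) - (j:ℤ)| := Int.one_le_abs (sub_ne_zero.mpr h2)
          calc (1:ℝ) ≤ ((|(i:ℤ) - (j:ℤ)| : ℤ) : ℝ) := by exact_mod_cast h3
            _ = |(i:ℝ) - (j:ℝ)| := by push_cast; ring_nf
        rw [hdist]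
        have hge : (1-ε)*(2*ρ) ≤ (1-ε) * (2*ρ) * |(i:ℝ) - (j:ℝ)| :=
          le_mul_of_one_le_right (by nlinarith) hij1
        nlinarith [hge]
      have hmeas : ∀ k ∈ Finset.range K, MeasurableSet (ball (c k) (ε*ρ/4)) :=
        fun k _ => measurableSet_ball
      have hintk : ∀ k ∈ Finset.range K,
          IntegrableOn (fun z => |ψ z|) (ball (c k) (ε*ρ/4)) volume :=
        fun k _ => hintabs.mono_set (fun z hz => (htube k z hz).1)
      have hsum := integral_biUnion_finset (f := fun z => |ψ z|) (μ := volume)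
        (Finset.range K) hmeas hdisj hintk
      have hUsub : (⋃ k ∈ Finset.range K, ball (c k) (ε*ρ/4)) ⊆ A := by
        intro z hz
        rw [mem_iUnion₂] at hz
        obtain ⟨k, _, hzk⟩ := hz
        exact (htube k z hzk).1
      have hUle : (∫ z in ⋃ k ∈ Finset.range K, ball (c k) (ε*ρ/4), |ψ z|) ≤ I :=
        setIntegral_mono_set hintabs
          (Filter.Eventually.of_forall fun z => abs_nonneg _)
          (HasSubset.Subset.eventuallyLE hUsub)
      have hKsum : (K:ℝ) * ((-m/2) * w0) ≤ I := by
        calc (K:ℝ) * ((-m/2) * w0)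
            = ∑ _k ∈ Finset.range K, ((-m/2) * w0) := by
              rw [Finset.sum_const, Finset.card_range, nsmul_eq_mul]
          _ ≤ ∑ k ∈ Finset.range K, ∫ z in ball (c k) (ε*ρ/4), |ψ z| :=
              Finset.sum_le_sum fun k _ => heach k
          _ = ∫ z in ⋃ k ∈ Finset.range K, ball (c k) (ε*ρ/4), |ψ z| := hsum.symm
          _ ≤ I := hUle
      have hposmw : 0 < (-m/2) * w0 := mul_pos (by linarith) hw0pos
      rw [div_lt_iff₀ hposmw] at hK
      linarith
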